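/- (Matching decomposition preserving a marked neutral edge.) Let n = 2m, let A ⊔ B be a partition of {1,…,n} with |A| = |B| = m, let a ∈ A and b ∈ B, and let G be a directed graph on {1,…,n} of multidegree (d,…,d) containing the edge (a,b). Then X_G lies in the additive subgroup of ℤ[u_1,…,u_n,v_1,…,v_n] generated by the products X_{Γ_1}·X_{Γ_2}⋯X_{Γ_d} in which each Γ_j is a perfect matching on {1,…,n} all of whose edges join a vertex of A to a vertex of B, and at least one Γ_j contains the edge (a,b). -/
import Mathlib


open MvPolynomial

/-- A directed multigraph on the vertex set `Fin n`: a multiset of ordered pairs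
(multiple edges allowed). -/
abbrev DGraph (n : ℕ) := Multiset (Fin n × Fin n)

/-- `Γ` has no loops. -/
def DGraph.loopless {n : ℕ} (Γ : DGraph n) : Prop := ∀ e ∈ Γ, e.1 ≠ e.2

/-- The multidegree (valence) of `Γ` at the vertex `v`: the number of edges of `Γ`
incident to `v`, counted with multiplicity. -/
def DGraph.mdeg {n : ℕ} (Γ : DGraph n) (v : Fin n) : ℕ :=
  Multiset.countP (fun e => e.1 = v) Γ + Multiset.countP (fun e => e.2 = v) Γ

/-- A perfect matching on `{1,…,n}`: a directed graph of multidegree `(1,…,1)`.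
(Multidegree one everywhere forces looplessness.) -/
def DGraph.isPM {n : ℕ} (Γ : DGraph n) : Prop := ∀ v, Γ.mdeg v = 1

/-- The invariant `X_Γ = ∏_{(i,j) ∈ Γ} (u_j v_i - u_i v_j)`, where the variable
`Sum.inl i` plays the role of `u_i` and `Sum.inr i` plays the role of `v_i`. -/
noncomputable def XG {n : ℕ} (Γ : DGraph n) : MvPolynomial (Fin n ⊕ Fin n) ℤ :=
  (Γ.map (fun e => X (Sum.inl e.2) * X (Sum.inr e.1) - X (Sum.inl e.1) * X (Sum.inr e.2))).prod

namespace MDME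

variable {n : ℕ}

noncomputable def br (i j : Fin n) : MvPolynomial (Fin n ⊕ Fin n) ℤ :=
  X (Sum.inl j) * X (Sum.inr i) - X (Sum.inl i) * X (Sum.inr j)

lemma XG_cons (e : Fin n × Fin n) (G : DGraph n) : XG (e ::ₘ G) = br e.1 e.2 * XG G := by
  simp [XG, br, Multiset.map_cons, Multiset.prod_cons]

lemma XG_add (G H : DGraph n) : XG (G + H) = XG G * XG H := by
  simp [XG, Multiset.map_add, Multiset.prod_add]

lemma XG_zero : XG (0 : DGraph n) = 1 := by simp [XG]

lemma XG_sum {ι : Type*} (s : Finset ι) (f : ι → DGraph n) :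
    XG (∑ j ∈ s, f j) = ∏ j ∈ s, XG (f j) := by
  classical
  induction s using Finset.cons_induction with
  | empty => simp [XG_zero]
  | cons i s hi ih => rw [Finset.sum_cons, Finset.prod_cons, XG_add, ih]

lemma plucker (x y z w : Fin n) : br x y * br z w = br w y * br z x - br z y * br w x := by
  simp only [br]; ring

lemma mdeg_cons (e : Fin n × Fin n) (G : DGraph n) (v : Fin n) :
    DGraph.mdeg (e ::ₘ G) v = G.mdeg v + ((if e.1 = v then 1 else 0) + (if e.2 = v then 1 else 0)) := by
  simp only [DGraph.mdeg, Multiset.countP_cons]; omega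

lemma mdeg_add (G H : DGraph n) (v : Fin n) : DGraph.mdeg (G + H) v = G.mdeg v + H.mdeg v := by
  simp only [DGraph.mdeg, Multiset.countP_add]; omega

lemma countP_mono {α : Type*} (p q : α → Prop) [DecidablePred p] [DecidablePred q]
    (s : Multiset α) (h : ∀ e ∈ s, p e → q e) : s.countP p ≤ s.countP q := by
  induction s using Multiset.induction with
  | empty => simp
  | cons a s ih =>
    rw [Multiset.countP_cons, Multiset.countP_cons]
    have h1 := h a (Multiset.mem_cons_self a s)
    have h2 := ih (fun e he => h e (Multiset.mem_cons_of_mem he))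
    split_ifs with hp hq <;> simp_all <;> omega

lemma countP_split {α : Type*} (p q : α → Prop) [DecidablePred p] [DecidablePred q]
    (s : Multiset α) :
    s.countP p = s.countP (fun e => p e ∧ q e) + s.countP (fun e => p e ∧ ¬ q e) := by
  classical
  induction s using Multiset.induction with
  | empty => simp
  | cons a s ih =>
    simp only [Multiset.countP_cons]
    rw [ih]
    split_ifs <;> simp_all <;> omega

lemma countP_or_disjoint {α : Type*} (p q : α → Prop) [DecidablePred p] [DecidablePred q]
    (s : Multiset α) (h : ∀ e ∈ s, ¬ (p e ∧ q e)) :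
    s.countP (fun e => p e ∨ q e) = s.countP p + s.countP q := by
  classical
  induction s using Multiset.induction with
  | empty => simp
  | cons a s ih =>
    simp only [Multiset.countP_cons]
    have h1 := h a (Multiset.mem_cons_self a s)
    have h2 := ih (fun e he => h e (Multiset.mem_cons_of_mem he))
    rw [h2]
    split_ifs <;> simp_all <;> omega

lemma sum_mdeg (T : Finset (Fin n)) (G : DGraph n) :
    ∑ v ∈ T, G.mdeg v =
      Multiset.countP (fun e => e.1 ∈ T) G + Multiset.countP (fun e => e.2 ∈ T) G := by
  classical
  induction G using Multiset.induction with
  | empty => simp [DGraph.mdeg]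
  | cons e G ih =>
    rw [Multiset.countP_cons, Multiset.countP_cons]
    calc ∑ v ∈ T, DGraph.mdeg (e ::ₘ G) v
        = ∑ v ∈ T, (DGraph.mdeg G v + ((if e.1 = v then 1 else 0) + (if e.2 = v then 1 else 0))) := by
          simp only [mdeg_cons]
      _ = (∑ v ∈ T, DGraph.mdeg G v) + ((∑ v ∈ T, if e.1 = v then 1 else 0)
            + (∑ v ∈ T, if e.2 = v then 1 else 0)) := by
          rw [Finset.sum_add_distrib, Finset.sum_add_distrib]
      _ = _ := by
          rw [ih, Finset.sum_ite_eq T e.1 (fun _ => 1), Finset.sum_ite_eq T e.2 (fun _ => 1)]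
          split_ifs <;> omega

end MDME

namespace MDME
variable {m d : ℕ}

lemma key_count {n : ℕ} (A : Finset (Fin n)) (G : DGraph n) :
    ∑ v ∈ A, G.mdeg v + 2 * Multiset.countP (fun e => e.1 ∉ A ∧ e.2 ∉ A) G
      = ∑ v ∈ Aᶜ, G.mdeg v + 2 * Multiset.countP (fun e => e.1 ∈ A ∧ e.2 ∈ A) G := by
  classical
  induction G using Multiset.induction with
  | empty => simp [DGraph.mdeg]
  | cons e G ih =>
    have hs : ∀ (T : Finset (Fin n)), ∑ v ∈ T, DGraph.mdeg (e ::ₘ G) v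
        = ∑ v ∈ T, DGraph.mdeg G v + ((if e.1 ∈ T then 1 else 0) + (if e.2 ∈ T then 1 else 0)) := by
      intro T
      rw [Finset.sum_congr rfl (fun v _ => mdeg_cons e G v), Finset.sum_add_distrib,
        Finset.sum_add_distrib, Finset.sum_ite_eq T e.1 (fun _ => 1),
        Finset.sum_ite_eq T e.2 (fun _ => 1)]
    rw [hs A, hs Aᶜ, Multiset.countP_cons, Multiset.countP_cons]
    simp only [Finset.mem_compl]
    by_cases h1 : e.1 ∈ A <;> by_cases h2 : e.2 ∈ A <;> simp [h1, h2] <;> omega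

lemma cAA_eq_cBB {m d : ℕ} (A : Finset (Fin (2*m))) (hA : A.card = m)
    (G : DGraph (2*m)) (hdeg : ∀ v, G.mdeg v = d) :
    Multiset.countP (fun e => e.1 ∈ A ∧ e.2 ∈ A) G
      = Multiset.countP (fun e => e.1 ∉ A ∧ e.2 ∉ A) G := by
  classical
  have hAc : Aᶜ.card = m := by
    rw [Finset.card_compl, hA, Fintype.card_fin]; omega
  have h := key_count A G
  rw [Finset.sum_congr rfl (fun v _ => hdeg v), Finset.sum_congr rfl (fun v (_ : v ∈ Aᶜ) => hdeg v),
    Finset.sum_const, Finset.sum_const, hA, hAc] at h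
  omega


lemma countP_map' {α β : Type*} (f : α → β) (s : Multiset α) (p : β → Prop) [DecidablePred p] :
    Multiset.countP p (s.map f) = Multiset.countP (fun a => p (f a)) s := by
  rw [Multiset.countP_map, ← Multiset.countP_eq_card_filter]

lemma exists_PM {m d : ℕ} (A : Finset (Fin (2*m))) (hA : A.card = m)
    (G : DGraph (2*m)) (hdeg : ∀ v, G.mdeg v = d)
    (hcross : ∀ e ∈ G, (e.1 ∈ A ∧ e.2 ∉ A) ∨ (e.2 ∈ A ∧ e.1 ∉ A))
    (e0 : Fin (2*m) × Fin (2*m)) (he0 : e0 ∈ G) :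
    ∃ M : DGraph (2*m), M ≤ G ∧ M.isPM ∧ e0 ∈ M := by
  classical
  obtain ⟨a0, b0, ha0, hb0, hor⟩ : ∃ a0 b0, a0 ∈ A ∧ b0 ∉ A ∧
      ((e0.1 = a0 ∧ e0.2 = b0) ∨ (e0.1 = b0 ∧ e0.2 = a0)) := by
    rcases hcross e0 he0 with ⟨h1, h2⟩ | ⟨h1, h2⟩
    · exact ⟨e0.1, e0.2, h1, h2, Or.inl ⟨rfl, rfl⟩⟩
    · exact ⟨e0.2, e0.1, h1, h2, Or.inr ⟨rfl, rfl⟩⟩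
  have hne : a0 ≠ b0 := fun h => hb0 (h ▸ ha0)
  have hcontrib : ∀ v : Fin (2*m), ((if e0.1 = v then 1 else 0) + (if e0.2 = v then 1 else 0) : ℕ)
      = ((if a0 = v then 1 else 0) + (if b0 = v then 1 else 0)) := by
    intro v
    rcases hor with ⟨h1, h2⟩ | ⟨h1, h2⟩ <;> rw [h1, h2] <;> omega
  set G' := G.erase e0 with hG'def
  have hG : G = e0 ::ₘ G' := (Multiset.cons_erase he0).symm
  have hG'le : G' ≤ G := Multiset.erase_le e0 G
  have hmdegG' : ∀ v, DGraph.mdeg G' v + ((if a0 = v then 1 else 0) + (if b0 = v then 1 else 0)) = d := by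
    intro v
    rw [← hcontrib v, ← mdeg_cons, ← hG]
    exact hdeg v
  have ha0' : DGraph.mdeg G' a0 + 1 = d := by
    have h := hmdegG' a0
    rw [if_pos rfl, if_neg (fun h' : b0 = a0 => hne h'.symm)] at h
    omega
  have hb0' : DGraph.mdeg G' b0 + 1 = d := by
    have h := hmdegG' b0
    rw [if_neg hne, if_pos rfl] at h
    omega
  have hother : ∀ v, v ≠ a0 → v ≠ b0 → DGraph.mdeg G' v = d := by
    intro v h1 h2
    have h := hmdegG' v
    rw [if_neg (fun h' : a0 = v => h1 h'.symm), if_neg (fun h' : b0 = v => h2 h'.symm)] at h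
    omega
  have hd1 : 1 ≤ d := by omega
  -- Hall's theorem setup
  set t : {x // x ∈ A.erase a0} → Finset (Fin (2*m)) := fun p =>
    Finset.univ.filter (fun q => q ∉ A ∧ q ≠ b0 ∧ ((p.1, q) ∈ G' ∨ (q, p.1) ∈ G')) with htdef
  have hmemt : ∀ p q, q ∈ t p ↔ (q ∉ A ∧ q ≠ b0 ∧ ((p.1, q) ∈ G' ∨ (q, p.1) ∈ G')) := by
    intro p q; simp [htdef]
  have hhall : ∀ s : Finset {x // x ∈ A.erase a0}, s.card ≤ (s.biUnion t).card := by
    intro s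
    set S : Finset (Fin (2*m)) := s.image Subtype.val with hSdef
    set N : Finset (Fin (2*m)) := s.biUnion t with hNdef
    have hScard : S.card = s.card := Finset.card_image_of_injective s Subtype.val_injective
    have hSmem : ∀ v ∈ S, v ∈ A ∧ v ≠ a0 := by
      intro v hv
      obtain ⟨p, _, rfl⟩ := Finset.mem_image.mp hv
      have := p.2
      rw [Finset.mem_erase] at this
      exact ⟨this.2, this.1⟩
    have hNmem : ∀ q ∈ N, q ∉ A ∧ q ≠ b0 := by
      intro q hq
      obtain ⟨p, _, hqt⟩ := Finset.mem_biUnion.mp hq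
      have := (hmemt p q).mp hqt
      exact ⟨this.1, this.2.1⟩
    have hb0N : b0 ∉ N := fun h => (hNmem b0 h).2 rfl
    -- counting over S
    have cS : Multiset.countP (fun e => e.1 ∈ S) G' + Multiset.countP (fun e => e.2 ∈ S) G'
        = d * S.card := by
      rw [← sum_mdeg S G']
      rw [Finset.sum_congr rfl (fun v hv => hother v (hSmem v hv).2
        (fun h => hb0 (h ▸ (hSmem v hv).1))), Finset.sum_const, smul_eq_mul, mul_comm]
    -- counting over insert b0 N
    have cNB : Multiset.countP (fun e => e.1 ∈ insert b0 N) G'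
        + Multiset.countP (fun e => e.2 ∈ insert b0 N) G' = d * N.card + (d - 1) := by
      rw [← sum_mdeg (insert b0 N) G', Finset.sum_insert hb0N]
      rw [Finset.sum_congr rfl (fun v hv => hother v
        (fun h => (hNmem v hv).1 (h ▸ ha0)) (hNmem v hv).2), Finset.sum_const,
        smul_eq_mul, mul_comm N.card d]
      omega
    -- monotonicity
    have mono1 : ∀ e ∈ G', (e.1 ∈ S) → (e.2 ∈ insert b0 N) := by
      intro e he h1
      have heG : e ∈ G := Multiset.mem_of_le hG'le he
      have h2 : e.2 ∉ A := by
        rcases hcross e heG with ⟨_, h⟩ | ⟨h, _⟩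
        · exact h
        · exact fun hh => ((hSmem e.1 h1).1 |> (fun ha => by
            rcases hcross e heG with ⟨_, hx⟩ | ⟨_, hx⟩
            · exact hx hh
            · exact hx ha))
      by_cases hb : e.2 = b0
      · exact Finset.mem_insert.mpr (Or.inl hb)
      · obtain ⟨p, hps, hpv⟩ := Finset.mem_image.mp h1
        refine Finset.mem_insert.mpr (Or.inr (Finset.mem_biUnion.mpr ⟨p, hps, ?_⟩))
        rw [hmemt]
        refine ⟨h2, hb, Or.inl ?_⟩
        rw [hpv]
        exact (show (e.1, e.2) ∈ G' from by rwa [Prod.mk.eta])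
    have mono2 : ∀ e ∈ G', (e.2 ∈ S) → (e.1 ∈ insert b0 N) := by
      intro e he h1
      have heG : e ∈ G := Multiset.mem_of_le hG'le he
      have h2 : e.1 ∉ A := by
        rcases hcross e heG with ⟨hx, h⟩ | ⟨h, hx⟩
        · exact fun _ => h (hSmem e.2 h1).1
        · exact hx
      by_cases hb : e.1 = b0
      · exact Finset.mem_insert.mpr (Or.inl hb)
      · obtain ⟨p, hps, hpv⟩ := Finset.mem_image.mp h1
        refine Finset.mem_insert.mpr (Or.inr (Finset.mem_biUnion.mpr ⟨p, hps, ?_⟩))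
        rw [hmemt]
        refine ⟨h2, hb, Or.inr ?_⟩
        rw [hpv]
        exact (show (e.1, e.2) ∈ G' from by rwa [Prod.mk.eta])
    have le1 := countP_mono _ _ G' mono1
    have le2 := countP_mono _ _ G' mono2
    have key : d * S.card ≤ d * N.card + (d - 1) := by omega
    have exp : d * (N.card + 1) = d * N.card + d := by ring
    have hlt : d * S.card < d * (N.card + 1) := by omega
    have := Nat.lt_of_mul_lt_mul_left hlt
    omega
  obtain ⟨f, hfinj, hft⟩ := (Finset.all_card_le_biUnion_card_iff_existsInjective' t).mp hhall
  have hf1 : ∀ p, f p ∉ A := fun p => ((hmemt p (f p)).mp (hft p)).1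
  have hf2 : ∀ p, f p ≠ b0 := fun p => ((hmemt p (f p)).mp (hft p)).2.1
  have hf3 : ∀ p, (p.1, f p) ∈ G' ∨ (f p, p.1) ∈ G' := fun p => ((hmemt p (f p)).mp (hft p)).2.2
  have hpA : ∀ p : {x // x ∈ A.erase a0}, p.1 ∈ A ∧ p.1 ≠ a0 := by
    intro p
    have := p.2
    rw [Finset.mem_erase] at this
    exact ⟨this.2, this.1⟩
  set edge : {x // x ∈ A.erase a0} → Fin (2*m) × Fin (2*m) := fun p =>
    if (p.1, f p) ∈ G' then (p.1, f p) else (f p, p.1) with hedgedef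
  have hedgeend : ∀ p, edge p = (p.1, f p) ∨ edge p = (f p, p.1) := by
    intro p
    simp only [hedgedef]
    split_ifs <;> [exact Or.inl rfl; exact Or.inr rfl]
  have hedgeG' : ∀ p, edge p ∈ G' := by
    intro p
    simp only [hedgedef]
    split_ifs with h
    · exact h
    · exact (hf3 p).resolve_left h
  set l : Multiset {x // x ∈ A.erase a0} := (A.erase a0).attach.val with hldef
  have hlnodup : l.Nodup := (A.erase a0).attach.nodup
  have hlmem : ∀ p, p ∈ l := fun p => Finset.mem_attach _ p
  set M : DGraph (2*m) := e0 ::ₘ l.map edge with hMdef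
  -- Nodup of the mapped part
  have hmapnodup : (l.map edge).Nodup := by
    refine Multiset.Nodup.map_on ?_ hlnodup
    intro p _ q _ hpq
    rcases hedgeend p with h1 | h1 <;> rcases hedgeend q with h2 | h2 <;>
      rw [h1, h2] at hpq
    · exact Subtype.ext (show (p.1 : Fin (2*m)) = q.1 from congrArg Prod.fst hpq)
    · exfalso
      have u1 : (p.1 : Fin (2*m)) = f q := congrArg Prod.fst hpq
      have := (hpA p).1; rw [u1] at this; exact hf1 q this
    · exfalso
      have u1 : f p = (q.1 : Fin (2*m)) := congrArg Prod.fst hpq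
      have := (hpA q).1; rw [← u1] at this; exact hf1 p this
    · exact Subtype.ext (show (p.1 : Fin (2*m)) = q.1 from congrArg Prod.snd hpq)
  have he0notmap : e0 ∉ l.map edge := by
    intro hmem
    obtain ⟨p, _, hpe⟩ := Multiset.mem_map.mp hmem
    rcases hedgeend p with h1 | h1 <;> rw [h1] at hpe <;> rcases hor with ⟨g1, g2⟩ | ⟨g1, g2⟩
    · have u1 : (p.1 : Fin (2*m)) = a0 := (show (p.1 : Fin (2*m)) = e0.1 from congrArg Prod.fst hpe).trans g1
      exact (hpA p).2 u1
    · have u1 : (p.1 : Fin (2*m)) = b0 := (show (p.1 : Fin (2*m)) = e0.1 from congrArg Prod.fst hpe).trans g1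
      exact hb0 (u1 ▸ (hpA p).1)
    · have u1 : f p = a0 := (show f p = e0.1 from congrArg Prod.fst hpe).trans g1
      exact hf1 p (u1.symm ▸ ha0)
    · have u1 : f p = b0 := (show f p = e0.1 from congrArg Prod.fst hpe).trans g1
      exact hf2 p u1
  have hMnodup : M.Nodup := Multiset.nodup_cons.mpr ⟨he0notmap, hmapnodup⟩
  have hMsub : M ⊆ G := by
    intro x hx
    rcases Multiset.mem_cons.mp hx with h | h
    · exact h ▸ he0
    · obtain ⟨p, _, hpe⟩ := Multiset.mem_map.mp h
      exact Multiset.mem_of_le hG'le (hpe ▸ hedgeG' p)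
  have hMle : M ≤ G := (Multiset.le_iff_subset hMnodup).mpr hMsub
  refine ⟨M, hMle, ?_, Multiset.mem_cons_self e0 _⟩
  intro v
  rw [hMdef, mdeg_cons, hcontrib v]
  have hmap : DGraph.mdeg (Multiset.map edge l) v
      = Multiset.countP (fun p => (p.1 : Fin (2*m)) = v ∨ f p = v) l := by
    have hdisj : ∀ p ∈ l, ¬((edge p).1 = v ∧ (edge p).2 = v) := by
      intro p _ hw
      obtain ⟨w1, w2⟩ := hw
      rcases hedgeend p with h | h <;> rw [h] at w1 w2
      · have : f p ∈ A := by
          rw [show f p = v from w2, ← show (p.1 : Fin (2*m)) = v from w1]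
          exact (hpA p).1
        exact hf1 p this
      · have : f p ∈ A := by
          rw [show f p = v from w1, ← show (p.1 : Fin (2*m)) = v from w2]
          exact (hpA p).1
        exact hf1 p this
    rw [DGraph.mdeg, countP_map', countP_map', ← countP_or_disjoint _ _ l hdisj]
    refine Multiset.countP_congr rfl (fun p _ => propext ?_)
    rcases hedgeend p with h | h <;> rw [h] <;> first | exact Iff.rfl | exact or_comm
  rw [hmap]
  by_cases hva : v = a0
  · subst hva
    rw [if_pos rfl, if_neg (fun h : b0 = v => hne h.symm)]
    have hz : Multiset.countP (fun p => (p.1 : Fin (2*m)) = v ∨ f p = v) l = 0 := by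
      refine Multiset.countP_eq_zero.mpr (fun p _ hp => ?_)
      rcases hp with h1 | h1
      · exact (hpA p).2 h1
      · exact hf1 p (h1.symm ▸ ha0)
    omega
  · by_cases hvb : v = b0
    · subst hvb
      rw [if_neg (fun h : a0 = v => hne h), if_pos rfl]
      have hz : Multiset.countP (fun p => (p.1 : Fin (2*m)) = v ∨ f p = v) l = 0 := by
        refine Multiset.countP_eq_zero.mpr (fun p _ hp => ?_)
        rcases hp with h1 | h1
        · exact hb0 (h1 ▸ (hpA p).1)
        · exact hf2 p h1
      omega
    · rw [if_neg (fun h : a0 = v => hva h.symm), if_neg (fun h : b0 = v => hvb h.symm)]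
      by_cases hvA : v ∈ A
      · have hv' : v ∈ A.erase a0 := Finset.mem_erase.mpr ⟨hva, hvA⟩
        have hcnt : Multiset.countP (fun p => (p.1 : Fin (2*m)) = v ∨ f p = v) l
            = Multiset.count (⟨v, hv'⟩ : {x // x ∈ A.erase a0}) l := by
          rw [Multiset.count]
          refine Multiset.countP_congr rfl (fun p _ => propext ?_)
          constructor
          · rintro (h1 | h1)
            · exact Subtype.ext h1.symm
            · exact absurd (show f p ∈ A by rw [h1]; exact hvA) (hf1 p)
          · intro h1
            exact Or.inl (congrArg Subtype.val h1).symm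
        rw [hcnt, Multiset.count_eq_one_of_mem hlnodup (hlmem _)]
      · have hvB' : v ∈ Aᶜ.erase b0 := Finset.mem_erase.mpr ⟨hvb, Finset.mem_compl.mpr hvA⟩
        have hm1 : 1 ≤ m := by
          have := Finset.card_pos.mpr ⟨a0, ha0⟩
          omega
        have himage : (Finset.univ.image f) = Aᶜ.erase b0 := by
          apply Finset.eq_of_subset_of_card_le
          · intro q hq
            obtain ⟨p, _, rfl⟩ := Finset.mem_image.mp hq
            exact Finset.mem_erase.mpr ⟨hf2 p, Finset.mem_compl.mpr (hf1 p)⟩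
          · rw [Finset.card_erase_of_mem (Finset.mem_compl.mpr hb0), Finset.card_compl,
              Fintype.card_fin, hA, Finset.card_image_of_injective _ hfinj, Finset.card_univ,
              Fintype.card_coe, Finset.card_erase_of_mem ha0, hA]
            omega
        have hvim : v ∈ Finset.univ.image f := himage ▸ hvB'
        obtain ⟨p0, _, hp0⟩ := Finset.mem_image.mp hvim
        have hcnt : Multiset.countP (fun p => (p.1 : Fin (2*m)) = v ∨ f p = v) l
            = Multiset.count p0 l := by
          rw [Multiset.count]
          refine Multiset.countP_congr rfl (fun p _ => propext ?_)
          constructor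
          · rintro (h1 | h1)
            · exact absurd (h1 ▸ (hpA p).1) hvA
            · exact hfinj (hp0.trans h1.symm)
          · intro h1
            exact Or.inr (h1 ▸ hp0)
        rw [hcnt, Multiset.count_eq_one_of_mem hlnodup (hlmem _)]


lemma decomp {m : ℕ} (A : Finset (Fin (2*m))) (hA : A.card = m) :
    ∀ (d : ℕ) (G : DGraph (2*m)), (∀ v, G.mdeg v = d) →
    (∀ e ∈ G, (e.1 ∈ A ∧ e.2 ∉ A) ∨ (e.2 ∈ A ∧ e.1 ∉ A)) →
    ∃ Γs : Fin d → DGraph (2*m),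
      (∀ j, (Γs j).isPM ∧ ∀ e ∈ Γs j, (e.1 ∈ A ∧ e.2 ∉ A) ∨ (e.2 ∈ A ∧ e.1 ∉ A)) ∧
      G = ∑ j, Γs j := by
  intro d
  induction d with
  | zero =>
    intro G hdeg hcross
    refine ⟨fun j => j.elim0, fun j => j.elim0, ?_⟩
    have hG0 : G = 0 := by
      by_contra h
      obtain ⟨e, he⟩ := Multiset.exists_mem_of_ne_zero h
      have hd := hdeg e.1
      have h1 : 0 < Multiset.countP (fun x : Fin (2*m) × Fin (2*m) => x.1 = e.1) G :=
        Multiset.countP_pos.mpr ⟨e, he, rfl⟩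
      rw [DGraph.mdeg] at hd
      omega
    rw [hG0]
    simp
  | succ d ih =>
    intro G hdeg hcross
    by_cases hG0 : G = 0
    · refine ⟨fun _ => 0, fun j => ⟨fun v => ?_, fun e he => absurd he (by simp)⟩, by simp [hG0]⟩
      exfalso
      have hd := hdeg v
      rw [hG0] at hd
      simp [DGraph.mdeg] at hd
    · obtain ⟨e, he⟩ := Multiset.exists_mem_of_ne_zero hG0
      obtain ⟨M, hMle, hMpm, _⟩ := exists_PM A hA G hdeg hcross e he
      have hdeg' : ∀ v, DGraph.mdeg (G - M) v = d := by
        intro v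
        have h2 := mdeg_add (G - M) M v
        rw [tsub_add_cancel_of_le hMle] at h2
        have h3 := hdeg v
        have h4 := hMpm v
        omega
      have hcross' : ∀ e' ∈ G - M, (e'.1 ∈ A ∧ e'.2 ∉ A) ∨ (e'.2 ∈ A ∧ e'.1 ∉ A) :=
        fun e' he' => hcross e' (Multiset.mem_of_le (tsub_le_self) he')
      obtain ⟨Γs', hΓs', hsum⟩ := ih (G - M) hdeg' hcross'
      refine ⟨Fin.cons M Γs', ?_, ?_⟩
      · intro j
        refine Fin.cases ?_ ?_ j
        · exact ⟨hMpm, fun e' he' => hcross e' (Multiset.mem_of_le hMle he')⟩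
        · intro i; exact hΓs' i
      · rw [Fin.sum_cons, ← hsum, add_comm, tsub_add_cancel_of_le hMle]

lemma base_case (m d : ℕ) (A : Finset (Fin (2 * m))) (hA : A.card = m)
    (a b : Fin (2 * m)) (ha : a ∈ A) (hb : b ∉ A)
    (G : DGraph (2 * m)) (hGdeg : ∀ v, G.mdeg v = d)
    (hab : (a, b) ∈ G)
    (hcross : ∀ e ∈ G, (e.1 ∈ A ∧ e.2 ∉ A) ∨ (e.2 ∈ A ∧ e.1 ∉ A)) :
    XG G ∈ AddSubgroup.closure
      {p | ∃ Γs : Fin d → DGraph (2 * m),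
        (∀ j, (Γs j).isPM ∧
          ∀ e ∈ Γs j, (e.1 ∈ A ∧ e.2 ∉ A) ∨ (e.2 ∈ A ∧ e.1 ∉ A)) ∧
        (∃ j, (a, b) ∈ Γs j) ∧ p = ∏ j, XG (Γs j)} := by
  classical
  have hd1 : 1 ≤ d := by
    have hd := hGdeg a
    have h1 : 0 < Multiset.countP (fun x : Fin (2*m) × Fin (2*m) => x.1 = a) G :=
      Multiset.countP_pos.mpr ⟨(a, b), hab, rfl⟩
    rw [DGraph.mdeg] at hd
    omega
  obtain ⟨d', rfl⟩ : ∃ d', d = d' + 1 := ⟨d - 1, by omega⟩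
  obtain ⟨M, hMle, hMpm, habM⟩ := exists_PM A hA G hGdeg hcross (a, b) hab
  have hdeg' : ∀ v, DGraph.mdeg (G - M) v = d' := by
    intro v
    have h2 := mdeg_add (G - M) M v
    rw [tsub_add_cancel_of_le hMle] at h2
    have h3 := hGdeg v
    have h4 := hMpm v
    omega
  have hcross' : ∀ e' ∈ G - M, (e'.1 ∈ A ∧ e'.2 ∉ A) ∨ (e'.2 ∈ A ∧ e'.1 ∉ A) :=
    fun e' he' => hcross e' (Multiset.mem_of_le (tsub_le_self) he')
  obtain ⟨Γs', hΓs', hsum⟩ := decomp A hA d' (G - M) hdeg' hcross'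
  refine AddSubgroup.subset_closure ⟨Fin.cons M Γs', ?_, ⟨0, by rw [Fin.cons_zero]; exact habM⟩, ?_⟩
  · intro j
    refine Fin.cases ?_ ?_ j
    · exact ⟨hMpm, fun e' he' => hcross e' (Multiset.mem_of_le hMle he')⟩
    · intro i; exact hΓs' i
  · have hGeq : G = M + (G - M) := by rw [add_comm, tsub_add_cancel_of_le hMle]
    rw [hGeq, XG_add, Fin.prod_univ_succ]
    simp only [Fin.cons_zero, Fin.cons_succ]
    rw [hsum, XG_sum]

lemma main_aux (m d : ℕ) (A : Finset (Fin (2*m))) (hA : A.card = m)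
    (a b : Fin (2*m)) (ha : a ∈ A) (hb : b ∉ A) :
    ∀ (k : ℕ) (G : DGraph (2*m)),
      Multiset.countP (fun e => e.1 ∈ A ∧ e.2 ∈ A) G
        + Multiset.countP (fun e => e.1 ∉ A ∧ e.2 ∉ A) G ≤ k →
      G.loopless → (∀ v, G.mdeg v = d) → (a, b) ∈ G →
      XG G ∈ AddSubgroup.closure
        {p | ∃ Γs : Fin d → DGraph (2 * m),
          (∀ j, (Γs j).isPM ∧
            ∀ e ∈ Γs j, (e.1 ∈ A ∧ e.2 ∉ A) ∨ (e.2 ∈ A ∧ e.1 ∉ A)) ∧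
          (∃ j, (a, b) ∈ Γs j) ∧ p = ∏ j, XG (Γs j)} := by
  classical
  intro k
  induction k with
  | zero =>
    intro G hcnt hGl hGdeg hab
    have hAA : ∀ e ∈ G, ¬(e.1 ∈ A ∧ e.2 ∈ A) := Multiset.countP_eq_zero.mp (by omega)
    have hBB : ∀ e ∈ G, ¬(e.1 ∉ A ∧ e.2 ∉ A) := Multiset.countP_eq_zero.mp (by omega)
    exact base_case m d A hA a b ha hb G hGdeg hab
      (fun e he => by have h1 := hAA e he; have h2 := hBB e he; tauto)
  | succ k ih =>
    intro G hcnt hGl hGdeg hab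
    by_cases h0 : Multiset.countP (fun e : Fin (2*m) × Fin (2*m) => e.1 ∈ A ∧ e.2 ∈ A) G
        + Multiset.countP (fun e : Fin (2*m) × Fin (2*m) => e.1 ∉ A ∧ e.2 ∉ A) G = 0
    · have hAA : ∀ e ∈ G, ¬(e.1 ∈ A ∧ e.2 ∈ A) := Multiset.countP_eq_zero.mp (by omega)
      have hBB : ∀ e ∈ G, ¬(e.1 ∉ A ∧ e.2 ∉ A) := Multiset.countP_eq_zero.mp (by omega)
      exact base_case m d A hA a b ha hb G hGdeg hab
        (fun e he => by have h1 := hAA e he; have h2 := hBB e he; tauto)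
    · have heq := cAA_eq_cBB A hA G hGdeg
      have hposA : 0 < Multiset.countP (fun e : Fin (2*m) × Fin (2*m) => e.1 ∈ A ∧ e.2 ∈ A) G := by
        omega
      have hposB : 0 < Multiset.countP (fun e : Fin (2*m) × Fin (2*m) => e.1 ∉ A ∧ e.2 ∉ A) G := by
        omega
      obtain ⟨eA, heA, hpA⟩ := Multiset.countP_pos.mp hposA
      obtain ⟨eB, heB, hpB⟩ := Multiset.countP_pos.mp hposB
      have hne : eB ≠ eA := fun h => hpB.1 (h ▸ hpA.1)
      have heB' : eB ∈ G.erase eA := (Multiset.mem_erase_of_ne hne).mpr heB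
      set G'' : DGraph (2*m) := (G.erase eA).erase eB with hG''def
      have hsplit : G = eA ::ₘ eB ::ₘ G'' := by
        rw [hG''def, Multiset.cons_erase heB', Multiset.cons_erase heA]
      have hG''le : G'' ≤ G := le_trans (Multiset.erase_le eB _) (Multiset.erase_le eA G)
      set G1 : DGraph (2*m) := (eB.2, eA.2) ::ₘ (eB.1, eA.1) ::ₘ G'' with hG1def
      set G2 : DGraph (2*m) := (eB.1, eA.2) ::ₘ (eB.2, eA.1) ::ₘ G'' with hG2def
      -- XG identity
      have hXG : XG G = XG G1 - XG G2 := by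
        rw [hsplit, hG1def, hG2def]
        simp only [XG_cons]
        have hp := plucker eA.1 eA.2 eB.1 eB.2
        linear_combination XG G'' * hp
      -- degrees
      have hdeg1 : ∀ v, DGraph.mdeg G1 v = d := by
        intro v
        have hd := hGdeg v
        rw [hsplit] at hd
        simp only [mdeg_cons] at hd
        rw [hG1def]
        simp only [mdeg_cons]
        split_ifs at hd ⊢ <;> omega
      have hdeg2 : ∀ v, DGraph.mdeg G2 v = d := by
        intro v
        have hd := hGdeg v
        rw [hsplit] at hd
        simp only [mdeg_cons] at hd
        rw [hG2def]
        simp only [mdeg_cons]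
        split_ifs at hd ⊢ <;> omega
      -- looplessness
      have hGl'' : ∀ e ∈ G'', e.1 ≠ e.2 := fun e he => hGl e (Multiset.mem_of_le hG''le he)
      have hl1 : DGraph.loopless G1 := by
        intro e he
        rw [hG1def] at he
        rcases Multiset.mem_cons.mp he with h | h
        · rw [h]; exact fun hh => hpB.2 (by rw [show eB.2 = eA.2 from hh]; exact hpA.2)
        · rcases Multiset.mem_cons.mp h with h' | h'
          · rw [h']; exact fun hh => hpB.1 (by rw [show eB.1 = eA.1 from hh]; exact hpA.1)
          · exact hGl'' e h'
      have hl2 : DGraph.loopless G2 := by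
        intro e he
        rw [hG2def] at he
        rcases Multiset.mem_cons.mp he with h | h
        · rw [h]; exact fun hh => hpB.1 (by rw [show eB.1 = eA.2 from hh]; exact hpA.2)
        · rcases Multiset.mem_cons.mp h with h' | h'
          · rw [h']; exact fun hh => hpB.2 (by rw [show eB.2 = eA.1 from hh]; exact hpA.1)
          · exact hGl'' e h'
      -- marked edge
      have habne1 : (a, b) ≠ eA := fun h => hb (by rw [show b = eA.2 from congrArg Prod.snd h]; exact hpA.2)
      have habne2 : (a, b) ≠ eB := fun h => hpB.1 (by rw [← show a = eB.1 from congrArg Prod.fst h]; exact ha)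
      have hab'' : (a, b) ∈ G'' := by
        rw [hG''def]
        exact (Multiset.mem_erase_of_ne habne2).mpr ((Multiset.mem_erase_of_ne habne1).mpr hab)
      have hab1 : (a, b) ∈ G1 := by
        rw [hG1def]; exact Multiset.mem_cons_of_mem (Multiset.mem_cons_of_mem hab'')
      have hab2 : (a, b) ∈ G2 := by
        rw [hG2def]; exact Multiset.mem_cons_of_mem (Multiset.mem_cons_of_mem hab'')
      -- bad edge counts
      have hcnt'' : Multiset.countP (fun e : Fin (2*m) × Fin (2*m) => e.1 ∈ A ∧ e.2 ∈ A) G''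
          + Multiset.countP (fun e : Fin (2*m) × Fin (2*m) => e.1 ∉ A ∧ e.2 ∉ A) G'' + 2 ≤ k + 1 := by
        rw [hsplit] at hcnt
        simp only [Multiset.countP_cons] at hcnt
        simp only [hpA.1, hpA.2, hpB.1, hpB.2, if_pos, if_neg, and_true, true_and,
          not_true, not_false_iff, and_false, false_and, if_true, if_false] at hcnt
        omega
      have hcnt1 : Multiset.countP (fun e : Fin (2*m) × Fin (2*m) => e.1 ∈ A ∧ e.2 ∈ A) G1
          + Multiset.countP (fun e : Fin (2*m) × Fin (2*m) => e.1 ∉ A ∧ e.2 ∉ A) G1 ≤ k := by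
        rw [hG1def]
        simp only [Multiset.countP_cons]
        simp only [hpA.1, hpA.2, hpB.1, hpB.2, if_pos, if_neg, and_true, true_and,
          not_true, not_false_iff, and_false, false_and, if_true, if_false]
        omega
      have hcnt2 : Multiset.countP (fun e : Fin (2*m) × Fin (2*m) => e.1 ∈ A ∧ e.2 ∈ A) G2
          + Multiset.countP (fun e : Fin (2*m) × Fin (2*m) => e.1 ∉ A ∧ e.2 ∉ A) G2 ≤ k := by
        rw [hG2def]
        simp only [Multiset.countP_cons]
        simp only [hpA.1, hpA.2, hpB.1, hpB.2, if_pos, if_neg, and_true, true_and,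
          not_true, not_false_iff, and_false, false_and, if_true, if_false]
        omega
      have m1 := ih G1 hcnt1 hl1 hdeg1 hab1
      have m2 := ih G2 hcnt2 hl2 hdeg2 hab2
      rw [hXG]
      exact AddSubgroup.sub_mem _ m1 m2

end MDME

/-- **Matching decomposition preserving a marked neutral edge.** Let `n = 2m`, let
`A ⊔ Aᶜ` be a partition of the vertices with `|A| = m`, let `a ∈ A`, `b ∉ A`, and let `G`
have multidegree `(d,…,d)` and contain the edge `(a,b)`.  Then `X_G` lies in the additive
subgroup generated by products `X_{Γ_1}⋯X_{Γ_d}` in which each `Γ_j` is a perfect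
matching all of whose edges join `A` to `Aᶜ`, and at least one `Γ_j` contains the edge
`(a,b)`. -/
theorem matching_decomposition_marked_edge (m d : ℕ)
    (A : Finset (Fin (2 * m))) (hA : A.card = m)
    (a b : Fin (2 * m)) (ha : a ∈ A) (hb : b ∉ A)
    (G : DGraph (2 * m)) (hGl : G.loopless) (hGdeg : ∀ v, G.mdeg v = d)
    (hab : (a, b) ∈ G) :
    XG G ∈ AddSubgroup.closure
      {p | ∃ Γs : Fin d → DGraph (2 * m),
        (∀ j, (Γs j).isPM ∧
          ∀ e ∈ Γs j, (e.1 ∈ A ∧ e.2 ∉ A) ∨ (e.2 ∈ A ∧ e.1 ∉ A)) ∧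
        (∃ j, (a, b) ∈ Γs j) ∧ p = ∏ j, XG (Γs j)} := by
  classical
  exact MDME.main_aux m d A hA a b ha hb
    (Multiset.countP (fun e => e.1 ∈ A ∧ e.2 ∈ A) G
      + Multiset.countP (fun e => e.1 ∉ A ∧ e.2 ∉ A) G) G le_rfl hGl hGdeg hab
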